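/- Run Algorithm 1 indefinitely on an IMAB instance I = (f_1, …, f_k) with k ≥ 2 arms, and for each arm i let L_i = sup_{t∈ℕ} N_i(t) be the total number of times arm i is ever pulled. Then for every arm i, if L_i is finite, the arm has stopped improving at its last pull: f_i(L_i) − f_i(L_i − 1) = 0. -/

import Mathlib

open scoped Classical

/-- A reward function: bounded in [0,1], nondecreasing, with decreasing marginal returns. -/
def IsRewardFn (f : ℕ → ℝ) : Prop :=
  (∀ n, 0 ≤ f n) ∧ (∀ n, f n ≤ 1) ∧ Monotone f ∧
    ∀ n, 1 ≤ n → f (n + 1) - f n ≤ f n - f (n - 1)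

/-- Cumulative reward from pulling an arm with reward function `f` for `N` pulls. -/
noncomputable def Rew (f : ℕ → ℝ) (N : ℕ) : ℝ := ∑ n ∈ Finset.Icc 1 N, f n

/-- Offline optimum: the best total reward over all allocations of `T` pulls to the `k` arms. -/
noncomputable def OPT {k : ℕ} (f : Fin k → ℕ → ℝ) (T : ℕ) : ℝ :=
  sSup {x : ℝ | ∃ M : Fin k → ℕ, (∑ i, M i) = T ∧ x = ∑ i, Rew (f i) (M i)}

/-- The arm pulled by Algorithm 1 (Horizon-Unaware Improving Bandits) at (0-indexed) step `t`,
given the current pull counts `N`.  During the first `2 * k` steps each arm is pulled twice,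
in round-robin order; afterwards the algorithm pulls an arm maximizing the optimistic estimate
`p i`, breaking ties in favor of the smallest count `N i` and then the smallest index. -/
noncomputable def alg1Pull {k : ℕ} [NeZero k] (f : Fin k → ℕ → ℝ)
    (N : Fin k → ℕ) (t : ℕ) : Fin k :=
  if t < 2 * k then ⟨t % k, Nat.mod_lt t (NeZero.pos k)⟩
  else
    let Nstar := Finset.univ.sup N
    let p : Fin k → ℝ := fun i =>
      Rew (f i) (N i) + ∑ n ∈ Finset.Icc 1 (Nstar - N i),
        (f i (N i) + (n : ℝ) * (f i (N i) - f i (N i - 1)))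
    ((Finset.univ.filter fun i : Fin k =>
        (∀ j, p j ≤ p i) ∧ ∀ j, (∀ l, p l ≤ p j) → N i ≤ N j).min).getD
      ⟨0, NeZero.pos k⟩

/-- `alg1Counts f t i` is the number of pulls of arm `i` made by Algorithm 1
during the first `t` steps on the instance `f`. -/
noncomputable def alg1Counts {k : ℕ} [NeZero k] (f : Fin k → ℕ → ℝ) : ℕ → Fin k → ℕ
  | 0 => fun _ => 0
  | t + 1 => fun i =>
      alg1Counts f t i + if alg1Pull f (alg1Counts f t) t = i then 1 else 0

/-- If Algorithm 1 pulls arm `i` only finitely many times — i.e., its pull counts are bounded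
and attain a maximum value `L` — then the arm has stopped improving at its last pull:
`f i L - f i (L - 1) = 0`. -/
-- optimistic estimate, matching the let-body in alg1Pull
noncomputable def pEst {k : ℕ} (f : Fin k → ℕ → ℝ) (N : Fin k → ℕ) (i : Fin k) : ℝ :=
  Rew (f i) (N i) + ∑ n ∈ Finset.Icc 1 (Finset.univ.sup N - N i),
    (f i (N i) + (n : ℝ) * (f i (N i) - f i (N i - 1)))

lemma argFilter_spec {k : ℕ} [NeZero k] (p : Fin k → ℝ) (N : Fin k → ℕ) (d : Fin k) (l : Fin k) :
    p l ≤ p (((Finset.univ.filter fun i : Fin k =>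
        (∀ j, p j ≤ p i) ∧ ∀ j, (∀ l, p l ≤ p j) → N i ≤ N j).min).getD d) := by
  obtain ⟨a, -, ha⟩ := Finset.exists_max_image Finset.univ p Finset.univ_nonempty
  have hAne : (Finset.univ.filter fun i : Fin k => ∀ j, p j ≤ p i).Nonempty :=
    ⟨a, by simpa using fun j => ha j (Finset.mem_univ j)⟩
  obtain ⟨b, hbA, hb⟩ := Finset.exists_min_image _ N hAne
  simp only [Finset.mem_filter, Finset.mem_univ, true_and] at hbA
  have hne : (Finset.univ.filter fun i : Fin k =>
      (∀ j, p j ≤ p i) ∧ ∀ j, (∀ l, p l ≤ p j) → N i ≤ N j).Nonempty := by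
    refine ⟨b, ?_⟩
    simp only [Finset.mem_filter, Finset.mem_univ, true_and]
    exact ⟨hbA, fun j hj => hb j (by simp only [Finset.mem_filter, Finset.mem_univ, true_and]; exact hj)⟩
  obtain ⟨c, hc⟩ := Finset.min_of_nonempty hne
  have hcmem := Finset.mem_of_min hc
  simp only [Finset.mem_filter, Finset.mem_univ, true_and] at hcmem
  rw [hc]
  exact hcmem.1 l

lemma alg1Pull_max {k : ℕ} [NeZero k] (f : Fin k → ℕ → ℝ) (N : Fin k → ℕ) (t : ℕ)
    (ht : 2 * k ≤ t) (l : Fin k) : pEst f N l ≤ pEst f N (alg1Pull f N t) := by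
  unfold alg1Pull
  rw [if_neg (not_lt.2 ht)]
  exact argFilter_spec (pEst f N) N _ l

lemma counts_mono {k : ℕ} [NeZero k] (f : Fin k → ℕ → ℝ) (i : Fin k) :
    Monotone (fun t => alg1Counts f t i) :=
  monotone_nat_of_le_succ fun t => by
    show alg1Counts f t i ≤ alg1Counts f (t+1) i
    simp [alg1Counts]

lemma sum_counts {k : ℕ} [NeZero k] (f : Fin k → ℕ → ℝ) (t : ℕ) :
    ∑ i, alg1Counts f t i = t := by
  induction t with
  | zero => simp [alg1Counts]
  | succ t ih =>
    show ∑ i, (alg1Counts f t i + if alg1Pull f (alg1Counts f t) t = i then 1 else 0) = t + 1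
    rw [Finset.sum_add_distrib, ih, Finset.sum_ite_eq]
    simp

lemma le_k_mul_sup {k : ℕ} [NeZero k] (f : Fin k → ℕ → ℝ) (t : ℕ) :
    t ≤ k * Finset.univ.sup (alg1Counts f t) := by
  have := Finset.sum_le_card_nsmul Finset.univ (alg1Counts f t)
    (Finset.univ.sup (alg1Counts f t)) (fun i _ => Finset.le_sup (Finset.mem_univ i))
  simpa [sum_counts, smul_eq_mul] using this

-- bounded monotone ℕ sequence attains a max
lemma bounded_stab (c : ℕ → ℕ) (B : ℕ) (hB : ∀ t, c t ≤ B) : ∃ T, ∀ t, c t ≤ c T := by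
  obtain ⟨T, hT⟩ : ∃ t, c t = Nat.findGreatest (fun n => ∃ t, c t = n) B :=
    Nat.findGreatest_spec (P := fun n => ∃ t, c t = n) (hB 0) ⟨0, rfl⟩
  exact ⟨T, fun t => hT ▸ Nat.le_findGreatest (hB t) ⟨t, rfl⟩⟩

lemma rew_nonneg {f : ℕ → ℝ} (hf : IsRewardFn f) (N : ℕ) : 0 ≤ Rew f N :=
  Finset.sum_nonneg fun n _ => hf.1 n

lemma rew_le {f : ℕ → ℝ} (hf : IsRewardFn f) (N : ℕ) : Rew f N ≤ N := by
  calc Rew f N ≤ ∑ _n ∈ Finset.Icc 1 N, (1:ℝ) := Finset.sum_le_sum fun n _ => hf.2.1 n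
  _ = N := by simp

lemma marg_nonneg {f : ℕ → ℝ} (hf : IsRewardFn f) (n : ℕ) : 0 ≤ f n - f (n-1) :=
  sub_nonneg.2 (hf.2.2.1 (Nat.sub_le n 1))

lemma marg_le {f : ℕ → ℝ} (hf : IsRewardFn f) (n : ℕ) (hn : 1 ≤ n) :
    (n : ℝ) * (f n - f (n-1)) ≤ 1 := by
  obtain ⟨hf0, hf1, hmono, hdmr⟩ := hf
  have key : ∀ b a : ℕ, 1 ≤ a → a ≤ b → f b - f (b-1) ≤ f a - f (a-1) := by
    intro b
    induction b with
    | zero => intro a h1 h2; omega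
    | succ b ih =>
      intro a h1 h2
      rcases Nat.lt_succ_iff_lt_or_eq.1 (Nat.lt_succ_of_le h2) with h | h
      · have hb1 : 1 ≤ b := le_trans h1 (Nat.lt_succ_iff.1 h)
        calc f (b+1) - f (b+1-1) = f (b+1) - f b := by simp
        _ ≤ f b - f (b-1) := hdmr b hb1
        _ ≤ f a - f (a-1) := ih a h1 (Nat.lt_succ_iff.1 h)
      · rw [h]
  have tele : ∀ n : ℕ, ∑ m ∈ Finset.Icc 1 n, (f m - f (m-1)) = f n - f 0 := by
    intro n
    induction n with
    | zero => simp
    | succ n ih =>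
      rw [Finset.sum_Icc_succ_top (by omega), ih]
      simp only [Nat.add_sub_cancel]
      ring
  calc (n : ℝ) * (f n - f (n-1)) = ∑ _m ∈ Finset.Icc 1 n, (f n - f (n-1)) := by
        simp [Finset.sum_const, mul_comm]; ring
  _ ≤ ∑ m ∈ Finset.Icc 1 n, (f m - f (m-1)) := by
        refine Finset.sum_le_sum fun m hm => ?_
        exact key n m (Finset.mem_Icc.1 hm).1 (Finset.mem_Icc.1 hm).2
  _ = f n - f 0 := tele n
  _ ≤ 1 := by have := hf1 n; have := hf0 0; linarith

lemma gauss (m : ℕ) : ∑ n ∈ Finset.Icc 1 m, (n:ℝ) = m * (m+1) / 2 := by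
  induction m with
  | zero => simp
  | succ m ih =>
    rw [Finset.sum_Icc_succ_top (by omega), ih]
    push_cast; ring

lemma pEst_upper {k : ℕ} [NeZero k] (f : Fin k → ℕ → ℝ) (hf : ∀ i, IsRewardFn (f i))
    (N : Fin k → ℕ) (j : Fin k) (hNj : 1 ≤ N j) :
    pEst f N j ≤ ((Finset.univ.sup N : ℕ) : ℝ) +
      ((Finset.univ.sup N : ℕ) : ℝ) * (((Finset.univ.sup N : ℕ) : ℝ) + 1) / (2 * N j) := by
  have hNjS : N j ≤ Finset.univ.sup N := Finset.le_sup (Finset.mem_univ j)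
  set S := Finset.univ.sup N with hSdef
  set s := S - N j with hsdef
  have hNjpos : (0:ℝ) < N j := by exact_mod_cast hNj
  have hscast : (s:ℝ) = (S:ℝ) - N j := by
    rw [hsdef]; exact Nat.cast_sub hNjS
  have hΔle : f j (N j) - f j (N j - 1) ≤ 1 / (N j : ℝ) := by
    rw [le_div_iff₀ hNjpos]
    have := marg_le (hf j) (N j) hNj
    linarith [this, mul_comm (f j (N j) - f j (N j - 1)) ((N j : ℝ))]
  have hsum : ∑ n ∈ Finset.Icc 1 s, (f j (N j) + (n : ℝ) * (f j (N j) - f j (N j - 1)))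
      ≤ ∑ n ∈ Finset.Icc 1 s, ((1:ℝ) + (n : ℝ) * (1 / (N j : ℝ))) := by
    refine Finset.sum_le_sum fun n hn => ?_
    have hn0 : (0:ℝ) ≤ (n:ℝ) := by positivity
    exact add_le_add ((hf j).2.1 _) (mul_le_mul_of_nonneg_left hΔle hn0)
  have hsum2 : ∑ n ∈ Finset.Icc 1 s, ((1:ℝ) + (n : ℝ) * (1 / (N j : ℝ)))
      = (s:ℝ) + (s:ℝ) * ((s:ℝ)+1) / 2 * (1 / (N j : ℝ)) := by
    rw [Finset.sum_add_distrib, ← Finset.sum_mul, gauss]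
    simp
  have hrew := rew_le (hf j) (N j)
  have hss : (s:ℝ) * ((s:ℝ)+1) ≤ (S:ℝ) * ((S:ℝ)+1) := by
    have h1 : (s:ℝ) ≤ (S:ℝ) := by nlinarith
    nlinarith
  have : pEst f N j ≤ (N j : ℝ) + ((s:ℝ) + (s:ℝ) * ((s:ℝ)+1) / 2 * (1 / (N j : ℝ))) := by
    unfold pEst
    rw [← hSdef, ← hsdef]
    exact add_le_add hrew (le_trans hsum (le_of_eq hsum2))
  have hdiv : (s:ℝ) * ((s:ℝ)+1) / 2 * (1 / (N j : ℝ)) ≤ (S:ℝ) * ((S:ℝ)+1) / (2 * N j) := by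
    rw [div_mul_div_comm, mul_one]
    gcongr
  linarith [this, hdiv, hscast]

lemma pEst_lower {k : ℕ} [NeZero k] (f : Fin k → ℕ → ℝ) (hf : ∀ i, IsRewardFn (f i))
    (N : Fin k → ℕ) (i : Fin k) (m : ℕ) (hm : m = Finset.univ.sup N - N i) :
    (f i (N i) - f i (N i - 1)) * (m:ℝ) * ((m:ℝ)+1) / 2 ≤ pEst f N i := by
  have h1 : (f i (N i) - f i (N i - 1)) * (m:ℝ) * ((m:ℝ)+1) / 2
      = ∑ n ∈ Finset.Icc 1 m, ((n : ℝ) * (f i (N i) - f i (N i - 1))) := by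
    rw [← Finset.sum_mul, gauss]; ring
  have h2 : ∑ n ∈ Finset.Icc 1 m, ((n : ℝ) * (f i (N i) - f i (N i - 1)))
      ≤ ∑ n ∈ Finset.Icc 1 m, (f i (N i) + (n : ℝ) * (f i (N i) - f i (N i - 1))) := by
    refine Finset.sum_le_sum fun n _ => ?_
    have := (hf i).1 (N i)
    linarith
  unfold pEst
  rw [← hm, h1]
  have := rew_nonneg (hf i) (N i)
  linarith

theorem alg1_finite_pulls_stops_improving (k : ℕ) [NeZero k] (hk : 2 ≤ k)
    (f : Fin k → ℕ → ℝ) (hf : ∀ i, IsRewardFn (f i)) (i : Fin k) (L : ℕ)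
    (hub : ∀ t, alg1Counts f t i ≤ L) (hatt : ∃ t, alg1Counts f t i = L) :
    f i L - f i (L - 1) = 0 := by
  rcases Nat.eq_zero_or_pos L with hL0 | hLpos
  · subst hL0; simp
  by_contra hne
  have hΔ : 0 < f i L - f i (L-1) := lt_of_le_of_ne (marg_nonneg (hf i) L) (Ne.symm hne)
  obtain ⟨Δ, hΔdef⟩ : ∃ Δ : ℝ, Δ = f i L - f i (L-1) := ⟨_, rfl⟩
  rw [← hΔdef] at hΔ
  obtain ⟨M, hMdef⟩ : ∃ M : ℕ, M = max 1 ⌈8/Δ⌉₊ := ⟨_, rfl⟩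
  obtain ⟨C, hCdef⟩ : ∃ C : ℕ, C = max (2*L+2) ⌈(17+Δ)/Δ⌉₊ := ⟨_, rfl⟩
  -- arms that are not pulled unboundedly often eventually stop being pulled
  have stab : ∀ j : Fin k, (¬ ∀ Cb, ∃ t, Cb ≤ alg1Counts f t j) →
      ∃ T, ∀ t, T ≤ t → alg1Pull f (alg1Counts f t) t ≠ j := by
    intro j h
    push_neg at h
    obtain ⟨B, hB⟩ := h
    obtain ⟨T, hT⟩ := bounded_stab (fun t => alg1Counts f t j) B (fun t => le_of_lt (hB t))
    refine ⟨T, fun t ht hpull => ?_⟩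
    have h1 : alg1Counts f (t+1) j = alg1Counts f t j + 1 := by
      show alg1Counts f t j + _ = _
      rw [if_pos hpull]
    have h2 := hT (t+1)
    have h3 := counts_mono f j ht
    simp only at h2 h3
    omega
  have hT0ex : ∀ j : Fin k, ∃ Tj : ℕ, (∀ Cb, ∃ t, Cb ≤ alg1Counts f t j) ∨
      (∀ t, Tj ≤ t → alg1Pull f (alg1Counts f t) t ≠ j) := by
    intro j
    by_cases h : ∀ Cb, ∃ t, Cb ≤ alg1Counts f t j
    · exact ⟨0, Or.inl h⟩
    · obtain ⟨T, hT⟩ := stab j h; exact ⟨T, Or.inr hT⟩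
  choose T0f hT0f using hT0ex
  have hT2ex : ∀ j : Fin k, ∃ Tj : ℕ,
      (∀ Cb, ∃ t, Cb ≤ alg1Counts f t j) → M ≤ alg1Counts f Tj j := by
    intro j
    by_cases h : ∀ Cb, ∃ t, Cb ≤ alg1Counts f t j
    · exact ⟨Classical.choose (h M), fun _ => Classical.choose_spec (h M)⟩
    · exact ⟨0, fun h' => absurd h' h⟩
  choose T2f hT2f using hT2ex
  obtain ⟨t₀, ht₀⟩ := hatt
  obtain ⟨t1, ht1def⟩ : ∃ t1 : ℕ, t1 = max (max (Finset.univ.sup T0f) (Finset.univ.sup T2f))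
      (max (max (2*k) t₀) (k * C)) := ⟨_, rfl⟩
  have hT0t1 : ∀ j, T0f j ≤ t1 := fun j => by
    rw [ht1def]
    exact le_trans (Finset.le_sup (Finset.mem_univ j))
      (le_trans (le_max_left _ _) (le_max_left _ _))
  have hT2t1 : ∀ j, T2f j ≤ t1 := fun j => by
    rw [ht1def]
    exact le_trans (Finset.le_sup (Finset.mem_univ j))
      (le_trans (le_max_right _ _) (le_max_left _ _))
  have ht₀t1 : t₀ ≤ t1 := by
    rw [ht1def]
    exact le_trans (le_max_right _ _) (le_trans (le_max_left _ _) (le_max_right _ _))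
  have h2k : 2 * k ≤ t1 := by
    rw [ht1def]
    exact le_trans (le_max_left _ _) (le_trans (le_max_left _ _) (le_max_right _ _))
  have hkC : k * C ≤ t1 := by
    rw [ht1def]
    exact le_trans (le_max_right _ _) (le_max_right _ _)
  obtain ⟨N, hNdef⟩ : ∃ N : Fin k → ℕ, N = alg1Counts f t1 := ⟨_, rfl⟩
  obtain ⟨S, hSdef⟩ : ∃ S : ℕ, S = Finset.univ.sup N := ⟨_, rfl⟩
  have hNi : N i = L := by
    rw [hNdef]
    refine le_antisymm (hub t1) ?_
    calc L = alg1Counts f t₀ i := ht₀.symm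
    _ ≤ alg1Counts f t1 i := counts_mono f i ht₀t1
  have hCS : C ≤ S := by
    have h2 := le_k_mul_sup f t1
    rw [← hNdef, ← hSdef] at h2
    exact Nat.le_of_mul_le_mul_left (le_trans hkC h2) (NeZero.pos k)
  obtain ⟨j, hjdef⟩ : ∃ j : Fin k, j = alg1Pull f N t1 := ⟨_, rfl⟩
  have hjmax : pEst f N i ≤ pEst f N j := hjdef ▸ alg1Pull_max f N t1 h2k i
  -- the pulled arm is pulled unboundedly often
  have hjUnb : ∀ Cb, ∃ t, Cb ≤ alg1Counts f t j := by
    rcases hT0f j with h | h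
    · exact h
    · exact absurd (hjdef.trans (by rw [hNdef])).symm (h t1 (hT0t1 j))
  have hNjM : M ≤ N j := by
    rw [hNdef]
    calc M ≤ alg1Counts f (T2f j) j := hT2f j hjUnb
    _ ≤ alg1Counts f t1 j := counts_mono f j (hT2t1 j)
  have hNj1 : 1 ≤ N j := le_trans (hMdef ▸ le_max_left 1 ⌈8/Δ⌉₊) hNjM
  have hLS : L ≤ S := by rw [← hNi, hSdef]; exact Finset.le_sup (Finset.mem_univ i)
  -- the two estimates
  have hup := pEst_upper f hf N j hNj1
  rw [← hSdef] at hup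
  have hlow := pEst_lower f hf N i (S - L) (by rw [hSdef, hNi])
  rw [hNi, ← hΔdef] at hlow
  -- numeric facts
  have hNjpos : (0:ℝ) < (N j : ℝ) := by exact_mod_cast hNj1
  have hΔNj : (8:ℝ) ≤ Δ * (N j : ℝ) := by
    have h1 : (8/Δ : ℝ) ≤ (N j : ℝ) := by
      calc (8/Δ : ℝ) ≤ (⌈8/Δ⌉₊ : ℝ) := Nat.le_ceil _
      _ ≤ (M : ℝ) := by exact_mod_cast hMdef ▸ le_max_right 1 ⌈8/Δ⌉₊
      _ ≤ (N j : ℝ) := by exact_mod_cast hNjM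
    rw [div_le_iff₀ hΔ] at h1
    linarith [h1]
  have hS1 : 2*(L:ℝ) + 2 ≤ (S:ℝ) := by
    have h : (2*L+2 : ℕ) ≤ S := le_trans (hCdef ▸ le_max_left (2*L+2) ⌈(17+Δ)/Δ⌉₊) hCS
    exact_mod_cast h
  have hS2 : 17 + Δ ≤ Δ * (S:ℝ) := by
    have h1 : ((17+Δ)/Δ : ℝ) ≤ (S : ℝ) := by
      calc ((17+Δ)/Δ : ℝ) ≤ (⌈(17+Δ)/Δ⌉₊ : ℝ) := Nat.le_ceil _
      _ ≤ (C : ℝ) := by exact_mod_cast hCdef ▸ le_max_right (2*L+2) ⌈(17+Δ)/Δ⌉₊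
      _ ≤ (S : ℝ) := by exact_mod_cast hCS
    rw [div_le_iff₀ hΔ] at h1
    linarith [h1]
  have hmcast : ((S - L : ℕ) : ℝ) = (S:ℝ) - (L:ℝ) := Nat.cast_sub hLS
  have hSnn : (0:ℝ) ≤ (S:ℝ) := by positivity
  have hdivle : (S:ℝ) * ((S:ℝ)+1) / (2 * N j) ≤ Δ * ((S:ℝ) * ((S:ℝ)+1)) / 16 := by
    rw [div_le_div_iff₀ (by positivity) (by norm_num)]
    nlinarith [mul_nonneg hSnn (by linarith : (0:ℝ) ≤ (S:ℝ)+1)]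
  have hchain : Δ * ((S - L : ℕ) : ℝ) * (((S - L : ℕ) : ℝ)+1) / 2
      ≤ (S:ℝ) + Δ * ((S:ℝ) * ((S:ℝ)+1)) / 16 := by
    calc Δ * ((S - L : ℕ) : ℝ) * (((S - L : ℕ) : ℝ)+1) / 2 ≤ pEst f N i := hlow
    _ ≤ pEst f N j := hjmax
    _ ≤ (S:ℝ) + (S:ℝ) * ((S:ℝ)+1) / (2 * N j) := hup
    _ ≤ _ := by linarith [hdivle]
  rw [hmcast] at hchain
  have hLnn : (0:ℝ) ≤ (L:ℝ) := Nat.cast_nonneg L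
  nlinarith [mul_pos hΔ (by linarith : (0:ℝ) < (S:ℝ)), mul_nonneg (le_of_lt hΔ) hLnn,
    mul_nonneg (mul_nonneg (le_of_lt hΔ) hLnn) hLnn, sq_nonneg ((S:ℝ) - 2*L),
    mul_nonneg (mul_nonneg (le_of_lt hΔ) hSnn) hLnn]
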